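/- Let r0, r1 : R → A be a subcongruence in Pos, and define a binary relation ⊑ on A by: x ⊑ y iff x = r0(z) and y = r1(z) for some z ∈ R. Then ⊑ is a preorder (reflexive and transitive) containing the partial order of A (x ≤ y implies x ⊑ y), and the quotient map c : A → C of A onto the posetal reflection of (A, ⊑) is a coinserter of r0 and r1 in Pos: c∘r0 ≤ c∘r1 pointwise, every monotone map c' : A → C' with c'∘r0 ≤ c'∘r1 factorizes through c, and for monotone u0, u1 with domain C, u0∘c ≤ u1∘c implies u0 ≤ u1. -/

import Mathlib

universe u

namespace Paper

/-- The pair `s0, s1` factorizes through the pair of monotone maps `r0, r1`. -/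
def FactorsPos {R A S : Type u} [PartialOrder R] [PartialOrder A] [PartialOrder S]
    (r0 r1 : R →o A) (s0 s1 : S →o A) : Prop :=
  ∃ t : S →o R, r0.comp t = s0 ∧ r1.comp t = s1

/-- `r0, r1` is collectively order-reflecting. -/
def CollOrderReflectingPos {R A : Type u} [PartialOrder R] [PartialOrder A]
    (r0 r1 : R →o A) : Prop :=
  ∀ (X : Type u) [PartialOrder X] (f f' : X →o R),
    r0.comp f ≤ r0.comp f' → r1.comp f ≤ r1.comp f' → f ≤ f'

/-- A subcongruence in `Pos`: an order-reflexive and transitive relation. -/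
def IsSubcongruencePos {R A : Type u} [PartialOrder R] [PartialOrder A]
    (r0 r1 : R →o A) : Prop :=
  CollOrderReflectingPos r0 r1 ∧
  (∀ (S : Type u) [PartialOrder S] (s0 s1 : S →o A), s0 ≤ s1 → FactorsPos r0 r1 s0 s1) ∧
  (∀ (S : Type u) [PartialOrder S] (s s' s'' : S →o A),
    FactorsPos r0 r1 s s' → FactorsPos r0 r1 s' s'' → FactorsPos r0 r1 s s'')

/-- `c : A → C` is (up to isomorphism) the quotient map of `A` onto the posetal
reflection of the preordered set `(A, sq)`: it is surjective and `c x ≤ c y ↔ sq x y`. -/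
def IsPosetalReflectionMap {A : Type u} (sq : A → A → Prop)
    (C : Type u) (instC : PartialOrder C) (c : A → C) : Prop :=
  letI := instC
  Function.Surjective c ∧ ∀ x y, c x ≤ c y ↔ sq x y

/-- Setoid from a preorder relation. -/
def sqSetoid {A : Type u} (sq : A → A → Prop) (hrefl : ∀ x, sq x x)
    (htrans : ∀ x y z, sq x y → sq y z → sq x z) : Setoid A :=
  ⟨fun x y => sq x y ∧ sq y x,
   ⟨fun x => ⟨hrefl x, hrefl x⟩, fun h => ⟨h.2, h.1⟩,
    fun h1 h2 => ⟨htrans _ _ _ h1.1 h2.1, htrans _ _ _ h2.2 h1.2⟩⟩⟩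

/-- for a subcongruence `r0, r1` in `Pos`, the relation
`x ⊑ y ↔ ∃ z, r0 z = x ∧ r1 z = y` is a preorder containing the order of `A`, and the
quotient map onto the posetal reflection of `(A, ⊑)` is a coinserter of `r0, r1`. -/
theorem stmt13 {R A : Type u} [PartialOrder R] [PartialOrder A]
    (r0 r1 : R →o A) (h : IsSubcongruencePos r0 r1)
    (sq : A → A → Prop) (hsq : ∀ x y, sq x y ↔ ∃ z : R, r0 z = x ∧ r1 z = y) :
    (∀ x, sq x x) ∧
    (∀ x y z, sq x y → sq y z → sq x z) ∧
    (∀ x y : A, x ≤ y → sq x y) ∧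
    (∃ (C : Type u) (instC : PartialOrder C) (c : A → C),
      IsPosetalReflectionMap sq C instC c) ∧
    (∀ (C : Type u) [PartialOrder C] (c : A → C),
      IsPosetalReflectionMap sq C inferInstance c →
        (Monotone c ∧
         (∀ z : R, c (r0 z) ≤ c (r1 z)) ∧
         (∀ (C' : Type u) [PartialOrder C'] (c' : A →o C'),
            (∀ z : R, c' (r0 z) ≤ c' (r1 z)) →
              ∃ k : C → C', Monotone k ∧ ∀ a, k (c a) = c' a) ∧
         (∀ (C' : Type u) [PartialOrder C'] (u0 u1 : C → C'),
            Monotone u0 → Monotone u1 → (∀ a, u0 (c a) ≤ u1 (c a)) →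
              ∀ x, u0 x ≤ u1 x))) := by
  obtain ⟨hcor, hreflx, htr⟩ := h
  -- containment: x ≤ y → sq x y
  have hle : ∀ x y : A, x ≤ y → sq x y := by
    intro x y hxy
    obtain ⟨t, ht0, ht1⟩ := hreflx PUnit (OrderHom.const _ x) (OrderHom.const _ y)
      (fun _ => hxy)
    exact (hsq x y).mpr ⟨t PUnit.unit, DFunLike.congr_fun ht0 PUnit.unit,
      DFunLike.congr_fun ht1 PUnit.unit⟩
  have hrefl : ∀ x, sq x x := fun x => hle x x le_rfl
  -- transitivity
  have htrans : ∀ x y z, sq x y → sq y z → sq x z := by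
    intro x y z hxy hyz
    obtain ⟨z1, hz10, hz11⟩ := (hsq x y).mp hxy
    obtain ⟨z2, hz20, hz21⟩ := (hsq y z).mp hyz
    have f1 : FactorsPos r0 r1 (OrderHom.const PUnit x) (OrderHom.const PUnit y) :=
      ⟨OrderHom.const _ z1, OrderHom.ext _ _ (funext fun _ => hz10),
        OrderHom.ext _ _ (funext fun _ => hz11)⟩
    have f2 : FactorsPos r0 r1 (OrderHom.const PUnit y) (OrderHom.const PUnit z) :=
      ⟨OrderHom.const _ z2, OrderHom.ext _ _ (funext fun _ => hz20),
        OrderHom.ext _ _ (funext fun _ => hz21)⟩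
    obtain ⟨t, ht0, ht1⟩ := htr PUnit _ _ _ f1 f2
    exact (hsq x z).mpr ⟨t PUnit.unit, DFunLike.congr_fun ht0 PUnit.unit,
      DFunLike.congr_fun ht1 PUnit.unit⟩
  refine ⟨hrefl, htrans, hle, ?_, ?_⟩
  · -- existence of posetal reflection
    letI s : Setoid A := sqSetoid sq hrefl htrans
    have hwd : ∀ a b a' b' : A, s.r a a' → s.r b b' → sq a b = sq a' b' := by
      intro a b a' b' ha hb
      exact propext ⟨fun hab => htrans _ _ _ ha.2 (htrans _ _ _ hab hb.1),
        fun hab => htrans _ _ _ ha.1 (htrans _ _ _ hab hb.2)⟩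
    letI instC : PartialOrder (Quotient s) :=
      { le := Quotient.lift₂ sq hwd
        lt := fun x y => Quotient.lift₂ sq hwd x y ∧ ¬Quotient.lift₂ sq hwd y x
        le_refl := fun x => Quotient.inductionOn x (fun a => hrefl a)
        le_trans := fun x y z => Quotient.inductionOn₃ x y z
          (fun a b c hab hbc => htrans a b c hab hbc)
        le_antisymm := fun x y => Quotient.inductionOn₂ x y
          (fun a b hab hba => Quotient.sound ⟨hab, hba⟩) }
    refine ⟨Quotient s, instC, Quotient.mk s, Quotient.exists_rep, ?_⟩
    intro x y
    exact Iff.rfl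
  · -- universal property
    intro C _ c ⟨hsurj, hc⟩
    have hmono : Monotone c := fun x y hxy => (hc x y).mpr (hle x y hxy)
    have hstep : ∀ z : R, c (r0 z) ≤ c (r1 z) := fun z =>
      (hc _ _).mpr ((hsq _ _).mpr ⟨z, rfl, rfl⟩)
    refine ⟨hmono, hstep, ?_, ?_⟩
    · intro C' _ c' hc'
      have key : ∀ a b : A, sq a b → c' a ≤ c' b := by
        intro a b hab
        obtain ⟨z, hz0, hz1⟩ := (hsq a b).mp hab
        calc c' a = c' (r0 z) := by rw [hz0]
          _ ≤ c' (r1 z) := hc' z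
          _ = c' b := by rw [hz1]
      refine ⟨fun v => c' (hsurj v).choose, ?_, ?_⟩
      · intro v w hvw
        have hv := (hsurj v).choose_spec
        have hw := (hsurj w).choose_spec
        exact key _ _ ((hc _ _).mp (by rw [hv, hw]; exact hvw))
      · intro a
        have hv := (hsurj (c a)).choose_spec
        exact le_antisymm (key _ _ ((hc _ _).mp hv.le)) (key _ _ ((hc _ _).mp hv.ge))
    · intro C' _ u0 u1 _ _ hu x
      obtain ⟨a, rfl⟩ := hsurj x
      exact hu a

end Paper
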